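/- Let U, E ∈ ℝ^{n×k}, Ũ = U + E, P = ŨᵀŨ − UᵀU, and λ > 0. Let c*_λ = (UᵀU + λI)⁻¹𝟏 / (𝟏ᵀ(UᵀU + λI)⁻¹𝟏) be the solution of the regularized problem for U, and let c̃*_λ = (ŨᵀŨ + λI)⁻¹𝟏 / (𝟏ᵀ(ŨᵀŨ + λI)⁻¹𝟏) be the solution for the perturbed matrix Ũ, assuming ŨᵀŨ + λI is positive definite. Set M_λ = UᵀU + P + λI = ŨᵀŨ + λI and W = I − M_λ⁻¹𝟏𝟏ᵀ/(𝟏ᵀM_λ⁻¹𝟏). Then Δc_λ := c̃*_λ − c*_λ satisfies Δc_λ = −W M_λ⁻¹ P c*_λ = −M_λ⁻¹ Wᵀ P c*_λ, and ‖Δc_λ‖₂ ≤ (‖P‖₂/λ) ‖c*_λ‖₂. -/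

import Mathlib

open scoped Matrix.Norms.L2Operator
open Matrix

/-- The Euclidean (ℓ₂) norm of a vector in `ℝⁿ`. -/
noncomputable def euclNorm {n : ℕ} (v : Fin n → ℝ) : ℝ := Real.sqrt (∑ i, v i ^ 2)

lemma euclNorm_eq_sqrt_dot {k : ℕ} (v : Fin k → ℝ) :
    euclNorm v = Real.sqrt (v ⬝ᵥ v) := by
  unfold euclNorm
  congr 1
  refine Finset.sum_congr rfl fun i _ => ?_
  simp [dotProduct, sq]

lemma euclNorm_neg {k : ℕ} (v : Fin k → ℝ) : euclNorm (-v) = euclNorm v := by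
  simp [euclNorm]

lemma euclNorm_mulVec_le {k : ℕ} (P : Matrix (Fin k) (Fin k) ℝ) (v : Fin k → ℝ) :
    euclNorm (P *ᵥ v) ≤ ‖P‖ * euclNorm v := by
  have h := P.l2_opNorm_mulVec ((WithLp.equiv 2 (Fin k → ℝ)).symm v)
  have e1 : ∀ w : Fin k → ℝ, ‖(WithLp.equiv 2 (Fin k → ℝ)).symm w‖ = euclNorm w := by
    intro w
    rw [EuclideanSpace.norm_eq]
    unfold euclNorm
    congr 1
    refine Finset.sum_congr rfl fun i _ => ?_
    simp [Real.norm_eq_abs, sq_abs]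
  rw [e1] at h
  have e2 : ‖(EuclideanSpace.equiv (Fin k) ℝ).symm (P *ᵥ (WithLp.equiv 2 (Fin k → ℝ)).symm v)‖
      = ‖(WithLp.equiv 2 (Fin k → ℝ)).symm (P *ᵥ v)‖ := rfl
  rw [e2, e1] at h
  exact h

/-- Dot product against `B *ᵥ ·` for a symmetric matrix. -/
lemma dot_mulVec_symm {k : ℕ} {B : Matrix (Fin k) (Fin k) ℝ} (hB : Bᵀ = B)
    (a b : Fin k → ℝ) : (B *ᵥ a) ⬝ᵥ b = a ⬝ᵥ (B *ᵥ b) := by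
  rw [dotProduct_comm, dotProduct_mulVec, ← mulVec_transpose, hB, dotProduct_comm]

theorem rmpe_perturbation {n k : ℕ} (U E Ut : Matrix (Fin n) (Fin k) ℝ)
    (hUt : Ut = U + E)
    (P : Matrix (Fin k) (Fin k) ℝ) (hP : P = Utᵀ * Ut - Uᵀ * U)
    (lam : ℝ) (hlam : 0 < lam)
    (Mlam : Matrix (Fin k) (Fin k) ℝ)
    (hMlam : Mlam = Utᵀ * Ut + lam • (1 : Matrix (Fin k) (Fin k) ℝ))
    (hpd : Mlam.PosDef)
    (cstar ct : Fin k → ℝ)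
    (hcstar : cstar =
      ((fun _ => (1 : ℝ)) ⬝ᵥ (Uᵀ * U + lam • (1 : Matrix (Fin k) (Fin k) ℝ))⁻¹ *ᵥ
          (fun _ => (1 : ℝ)))⁻¹ •
        (Uᵀ * U + lam • (1 : Matrix (Fin k) (Fin k) ℝ))⁻¹ *ᵥ (fun _ => (1 : ℝ)))
    (hct : ct = ((fun _ => (1 : ℝ)) ⬝ᵥ Mlam⁻¹ *ᵥ (fun _ => (1 : ℝ)))⁻¹ •
      Mlam⁻¹ *ᵥ (fun _ => (1 : ℝ)))
    (W : Matrix (Fin k) (Fin k) ℝ)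
    (hW : W = 1 - ((fun _ => (1 : ℝ)) ⬝ᵥ Mlam⁻¹ *ᵥ (fun _ => (1 : ℝ)))⁻¹ •
      (Mlam⁻¹ * Matrix.of (fun _ _ => (1 : ℝ)))) :
    ct - cstar = -((W * Mlam⁻¹ * P) *ᵥ cstar) ∧
    ct - cstar = -((Mlam⁻¹ * Wᵀ * P) *ᵥ cstar) ∧
    euclNorm (ct - cstar) ≤ (‖P‖ / lam) * euclNorm cstar := by
  rcases Nat.eq_zero_or_pos k with hk | hk
  · subst hk
    refine ⟨funext fun i => i.elim0, funext fun i => i.elim0, ?_⟩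
    simp [euclNorm]
  -- notation
  set o : Fin k → ℝ := fun _ => (1 : ℝ) with ho_def
  have ho : o ≠ 0 := by
    intro h
    have := congrFun h ⟨0, hk⟩
    simp [ho_def] at this
  set N : Matrix (Fin k) (Fin k) ℝ := Uᵀ * U + lam • (1 : Matrix (Fin k) (Fin k) ℝ) with hN_def
  -- positive definiteness of N
  have hone : (lam • (1 : Matrix (Fin k) (Fin k) ℝ)).PosDef := by
    refine Matrix.posDef_iff_dotProduct_mulVec.mpr ⟨?_, ?_⟩
    · simp [IsHermitian, conjTranspose_smul, star_trivial]
    · intro x hx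
      have hxx : (0 : ℝ) < x ⬝ᵥ x := by
        have := dotProduct_star_self_pos_iff (v := x)
        simp only [star_trivial] at this
        exact this.mpr hx
      simpa [smul_mulVec, one_mulVec, dotProduct_smul, star_trivial] using
        mul_pos hlam hxx
  have hNpd : N.PosDef := by
    rw [hN_def]
    have hUU : (Uᵀ * U).PosSemidef := by
      have := posSemidef_conjTranspose_mul_self U
      rwa [conjTranspose_eq_transpose_of_trivial] at this
    exact Matrix.PosDef.posSemidef_add hUU hone
  have hNinv : N⁻¹.PosDef := hNpd.inv
  have hMinv : Mlam⁻¹.PosDef := hpd.inv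
  -- scalars
  set s : ℝ := o ⬝ᵥ N⁻¹ *ᵥ o with hs_def
  set t : ℝ := o ⬝ᵥ Mlam⁻¹ *ᵥ o with ht_def
  have hs : 0 < s := by
    have := hNinv.dotProduct_mulVec_pos ho
    simpa [star_trivial, hs_def] using this
  have ht : 0 < t := by
    have := hMinv.dotProduct_mulVec_pos ho
    simpa [star_trivial, ht_def] using this
  -- invertibility facts
  have hNu : IsUnit N := hNpd.isUnit
  have hMu : IsUnit Mlam := hpd.isUnit
  have hNNinv : N * N⁻¹ = 1 := Matrix.mul_nonsing_inv _ (Matrix.isUnit_iff_isUnit_det _ |>.mp hNu)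
  have hMMinv : Mlam * Mlam⁻¹ = 1 :=
    Matrix.mul_nonsing_inv _ (Matrix.isUnit_iff_isUnit_det _ |>.mp hMu)
  have hMinvM : Mlam⁻¹ * Mlam = 1 :=
    Matrix.nonsing_inv_mul _ (Matrix.isUnit_iff_isUnit_det _ |>.mp hMu)
  -- basic vectors
  set m : Fin k → ℝ := Mlam⁻¹ *ᵥ o with hm_def
  set y : Fin k → ℝ := P *ᵥ cstar with hy_def
  -- Mlam = N + P
  have hMN : Mlam = N + P := by
    rw [hMlam, hP, hN_def]; abel
  -- N *ᵥ cstar = s⁻¹ • o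
  have hNc : N *ᵥ cstar = s⁻¹ • o := by
    rw [hcstar]
    rw [mulVec_smul, mulVec_mulVec, hNNinv, one_mulVec]
  have hMc : Mlam *ᵥ cstar = s⁻¹ • o + y := by
    rw [hMN, add_mulVec, hNc, hy_def]
  have hcstar2 : cstar = s⁻¹ • m + Mlam⁻¹ *ᵥ y := by
    have h1 : Mlam⁻¹ *ᵥ (Mlam *ᵥ cstar) = cstar := by
      rw [mulVec_mulVec, hMinvM, one_mulVec]
    rw [← h1, hMc, mulVec_add, mulVec_smul, hm_def]
  have hoc : o ⬝ᵥ cstar = 1 := by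
    rw [hcstar, dotProduct_smul]
    rw [← hs_def]
    simp [inv_mul_cancel₀ hs.ne']
  set q : ℝ := o ⬝ᵥ Mlam⁻¹ *ᵥ y with hq_def
  have hq0 : 1 = s⁻¹ * t + q := by
    have := congrArg (fun v => o ⬝ᵥ v) hcstar2
    simpa [hoc, dotProduct_add, dotProduct_smul, ht_def, hq_def, hm_def] using this
  have hq : q = 1 - s⁻¹ * t := by linarith
  have hscalar : t⁻¹ * q = t⁻¹ - s⁻¹ := by
    rw [hq]
    field_simp
  -- how J acts
  have hJ : ∀ u : Fin k → ℝ, (Matrix.of (fun _ => o)) *ᵥ u = (o ⬝ᵥ u) • o := by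
    intro u
    funext i
    simp [Matrix.mulVec, dotProduct, ho_def]
  -- action of W
  have hWv : ∀ u : Fin k → ℝ, W *ᵥ u = u - (t⁻¹ * (o ⬝ᵥ u)) • m := by
    intro u
    rw [hW, sub_mulVec, one_mulVec, smul_mulVec, ← mulVec_mulVec, hJ,
      mulVec_smul, smul_smul, ← hm_def]
  -- first equality
  have goal1 : ct - cstar = -((W * Mlam⁻¹ * P) *ᵥ cstar) := by
    have h1 : (W * Mlam⁻¹ * P) *ᵥ cstar = W *ᵥ (Mlam⁻¹ *ᵥ y) := by
      rw [hy_def, mulVec_mulVec, mulVec_mulVec]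
    rw [h1, hWv, ← hq_def, hct, hcstar2, hscalar]
    module
  refine ⟨goal1, ?_, ?_⟩
  · -- second: W * Mlam⁻¹ = Mlam⁻¹ * Wᵀ
    have hMinvT : Mlam⁻¹ᵀ = Mlam⁻¹ := by
      have h := hMinv.isHermitian
      rwa [IsHermitian, conjTranspose_eq_transpose_of_trivial] at h
    have hJT : (Matrix.of (fun _ => o) : Matrix (Fin k) (Fin k) ℝ)ᵀ
        = Matrix.of (fun _ => o) := by
      funext i j; simp [ho_def]
    have hWT : W * Mlam⁻¹ = Mlam⁻¹ * Wᵀ := by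
      rw [hW]
      rw [transpose_sub, transpose_one, transpose_smul, transpose_mul, hJT, hMinvT]
      rw [Matrix.sub_mul, Matrix.mul_sub, one_mul, mul_one, Matrix.smul_mul,
        Matrix.mul_smul, mul_assoc]
    rw [← hWT]
    exact goal1
  · -- the norm bound
    set A := W * Mlam⁻¹ with hA_def
    have hdc : ct - cstar = -(A *ᵥ y) := by
      rw [goal1]
      congr 1
      rw [hy_def, mulVec_mulVec]
    -- PSD of lam⁻¹ • 1 - Mlam⁻¹
    have smulPSD : ∀ (c : ℝ) (B : Matrix (Fin k) (Fin k) ℝ), 0 ≤ c → B.PosSemidef →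
        (c • B).PosSemidef := by
      intro c B hc hB
      refine Matrix.posSemidef_iff_dotProduct_mulVec.mpr ⟨?_, fun x => ?_⟩
      · show (c • B)ᴴ = c • B
        rw [conjTranspose_smul, hB.1]
        simp
      · rw [smul_mulVec, dotProduct_smul, smul_eq_mul]
        exact mul_nonneg hc (hB.dotProduct_mulVec_nonneg x)
    set G : Matrix (Fin k) (Fin k) ℝ := Utᵀ * Ut with hG_def
    have hG : G.PosSemidef := by
      rw [hG_def]
      have := posSemidef_conjTranspose_mul_self Ut
      rwa [conjTranspose_eq_transpose_of_trivial] at this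
    have hGG : (G * G).PosSemidef := by
      have h := posSemidef_conjTranspose_mul_self G
      rwa [hG.1] at h
    have hlG : (lam • G).PosSemidef := smulPSD lam G hlam.le hG
    have hS : (lam⁻¹ • (G * G + lam • G)).PosSemidef :=
      smulPSD _ _ (inv_nonneg.mpr hlam.le) (hGG.add hlG)
    have hGM : G * Mlam = G * G + lam • G := by
      rw [hMlam, mul_add, Matrix.mul_smul, mul_one]
    have hD : lam⁻¹ • (1 : Matrix (Fin k) (Fin k) ℝ) - Mlam⁻¹
        = Mlam⁻¹ * (lam⁻¹ • (G * G + lam • G)) * Mlam⁻¹ := by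
      have hD3 : Mlam⁻¹ * (lam⁻¹ • (G * G + lam • G)) * Mlam⁻¹ = lam⁻¹ • (Mlam⁻¹ * G) := by
        rw [← hGM, Matrix.mul_smul, Matrix.smul_mul,
          mul_assoc Mlam⁻¹ (G * Mlam) Mlam⁻¹, mul_assoc G Mlam Mlam⁻¹, hMMinv, mul_one]
      have hD2 : lam⁻¹ • (1 : Matrix (Fin k) (Fin k) ℝ) - Mlam⁻¹ = lam⁻¹ • (Mlam⁻¹ * G) := by
        nth_rewrite 1 [← hMinvM]
        nth_rewrite 2 [hMlam]
        rw [mul_add, Matrix.mul_smul, mul_one, smul_add, smul_smul,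
          inv_mul_cancel₀ hlam.ne', one_smul]
        abel
      rw [hD2, hD3]
    have hDpsd : (lam⁻¹ • (1 : Matrix (Fin k) (Fin k) ℝ) - Mlam⁻¹).PosSemidef := by
      rw [hD]
      have h := hS.mul_mul_conjTranspose_same Mlam⁻¹
      rwa [hMinv.1] at h
    have hMq : ∀ x : Fin k → ℝ, x ⬝ᵥ Mlam⁻¹ *ᵥ x ≤ lam⁻¹ * (x ⬝ᵥ x) := by
      intro x
      have h0 := hDpsd.dotProduct_mulVec_nonneg x
      simp only [star_trivial, sub_mulVec, smul_mulVec, one_mulVec, dotProduct_sub,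
        dotProduct_smul, smul_eq_mul] at h0
      linarith
    -- square root of Mlam⁻¹
    have hMinvPSD : Mlam⁻¹.PosSemidef := hMinv.posSemidef
    open scoped MatrixOrder in
    set R := CFC.sqrt Mlam⁻¹ with hR_def
    open scoped MatrixOrder in
    have hRR : R * R = Mlam⁻¹ := CFC.sqrt_mul_sqrt_self _ hMinvPSD.nonneg
    have hRT : Rᵀ = R := by
      open scoped MatrixOrder in
      have h : Rᴴ = R := (CFC.sqrt_nonneg Mlam⁻¹).posSemidef.1
      rwa [conjTranspose_eq_transpose_of_trivial] at h
    have hdot : ∀ a b : Fin k → ℝ, (R *ᵥ a) ⬝ᵥ (R *ᵥ b) = a ⬝ᵥ (Mlam⁻¹ *ᵥ b) := by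
      intro a b
      rw [dot_mulVec_symm hRT, mulVec_mulVec, hRR]
    set w : Fin k → ℝ := R *ᵥ o with hw_def
    set ry : Fin k → ℝ := R *ᵥ y with hry_def
    have hwt : w ⬝ᵥ w = t := by rw [hw_def, hdot, ← ht_def]
    set α : ℝ := w ⬝ᵥ ry with hα_def
    have hα : α = q := by rw [hα_def, hw_def, hry_def, hdot, ← hq_def]
    set z : Fin k → ℝ := ry - (t⁻¹ * α) • w with hz_def
    have hr1 : R *ᵥ ry = Mlam⁻¹ *ᵥ y := by
      rw [hry_def, mulVec_mulVec, hRR]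
    have hr2 : R *ᵥ w = m := by
      rw [hw_def, mulVec_mulVec, hRR, ← hm_def]
    have hRz : R *ᵥ z = Mlam⁻¹ *ᵥ y - (t⁻¹ * α) • m := by
      rw [hz_def, mulVec_sub, mulVec_smul, hr1, hr2]
    have hAyz : A *ᵥ y = R *ᵥ z := by
      rw [hRz, hα, hA_def, ← mulVec_mulVec, hWv, ← hq_def]
    have hz2 : z ⬝ᵥ z ≤ y ⬝ᵥ Mlam⁻¹ *ᵥ y := by
      have hrw : ry ⬝ᵥ w = α := by rw [dotProduct_comm, ← hα_def]
      have expand : z ⬝ᵥ z = ry ⬝ᵥ ry - t⁻¹ * α ^ 2 := by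
        rw [hz_def]
        rw [sub_dotProduct, dotProduct_sub, dotProduct_sub, smul_dotProduct, dotProduct_smul,
          smul_dotProduct, dotProduct_smul]
        rw [hrw, ← hα_def, hwt]
        simp only [smul_eq_mul]
        field_simp
        ring
      rw [expand, ← hdot y y, ← hry_def]
      have : 0 ≤ t⁻¹ * α ^ 2 := mul_nonneg (inv_nonneg.mpr ht.le) (sq_nonneg α)
      linarith
    have hfinal2 : (A *ᵥ y) ⬝ᵥ (A *ᵥ y) ≤ lam⁻¹ ^ 2 * (y ⬝ᵥ y) := by
      rw [hAyz, hdot z z]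
      have h1 : z ⬝ᵥ Mlam⁻¹ *ᵥ z ≤ lam⁻¹ * (z ⬝ᵥ z) := hMq z
      have h2 : lam⁻¹ * (z ⬝ᵥ z) ≤ lam⁻¹ * (y ⬝ᵥ Mlam⁻¹ *ᵥ y) :=
        mul_le_mul_of_nonneg_left hz2 (inv_nonneg.mpr hlam.le)
      have h3 : lam⁻¹ * (y ⬝ᵥ Mlam⁻¹ *ᵥ y) ≤ lam⁻¹ * (lam⁻¹ * (y ⬝ᵥ y)) :=
        mul_le_mul_of_nonneg_left (hMq y) (inv_nonneg.mpr hlam.le)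
      calc z ⬝ᵥ Mlam⁻¹ *ᵥ z ≤ lam⁻¹ * (z ⬝ᵥ z) := h1
        _ ≤ lam⁻¹ * (y ⬝ᵥ Mlam⁻¹ *ᵥ y) := h2
        _ ≤ lam⁻¹ * (lam⁻¹ * (y ⬝ᵥ y)) := h3
        _ = lam⁻¹ ^ 2 * (y ⬝ᵥ y) := by ring
    have hnA : euclNorm (A *ᵥ y) ≤ lam⁻¹ * euclNorm y := by
      rw [euclNorm_eq_sqrt_dot, euclNorm_eq_sqrt_dot]
      have h2 := Real.sqrt_le_sqrt hfinal2
      rwa [Real.sqrt_mul (sq_nonneg _), Real.sqrt_sq (inv_nonneg.mpr hlam.le)] at h2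
    have hnY : euclNorm y ≤ ‖P‖ * euclNorm cstar := by
      rw [hy_def]
      exact euclNorm_mulVec_le P cstar
    have hE : euclNorm (ct - cstar) = euclNorm (A *ᵥ y) := by
      rw [hdc, euclNorm_neg]
    rw [hE]
    calc euclNorm (A *ᵥ y) ≤ lam⁻¹ * euclNorm y := hnA
      _ ≤ lam⁻¹ * (‖P‖ * euclNorm cstar) :=
        mul_le_mul_of_nonneg_left hnY (inv_nonneg.mpr hlam.le)
      _ = (‖P‖ / lam) * euclNorm cstar := by
        field_simp
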